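/- Let R be the Laurent polynomial ring over ℂ in the variables Y_{j,n} (j ∈ {1,2}, n ∈ ℤ). Take incidence numbers I_{12} = 1, I_{21} = 2 (type B₂), and set A_{1,n} = Y_{1,n+1} Y_{1,n−1} Y_{2,n}^{−2}, A_{2,n} = Y_{2,n+1} Y_{2,n−1} Y_{1,n}^{−1}. Let S_1^−, S_2^− be the associated screening derivations on R. Then the elements F₁ = Y_{1,0} + Y_{1,2}^{−1} Y_{2,1}² + 2 Y_{2,1} Y_{2,3}^{−1} + Y_{2,3}^{−2} Y_{1,2} + Y_{1,4}^{−1} and F₂ = Y_{2,0} + Y_{2,2}^{−1} Y_{1,1} + Y_{1,3}^{−1} Y_{2,2} + Y_{2,4}^{−1} both lie in Ker S_1^− ∩ Ker S_2^−; moreover, the unique dominant monomial (a monomial involving no negative powers of the variables) occurring in F₁ is Y_{1,0}, and in F₂ it is Y_{2,0}. -/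

import Mathlib

/-- Exponent lattice of the Laurent polynomial ring in the variables `Y_{j,n}`,
`j ∈ {1,2}`, `n ∈ ℤ` (index `0` stands for the node `1`, index `1` for the node `2`). -/
abbrev LExp2 : Type := (Fin 2 × ℤ) →₀ ℤ

/-- The Laurent polynomial ring over `ℂ` in the variables `Y_{j,n}`. -/
abbrev LRing2 : Type := AddMonoidAlgebra ℂ LExp2

/-- The (invertible) monomial with exponent vector `v`. -/
noncomputable def Ym (v : LExp2) : LRing2 := AddMonoidAlgebra.single v 1

/-- The exponent vector of `Y_{j,n}^k`. -/
noncomputable def E (j : Fin 2) (n k : ℤ) : LExp2 := Finsupp.single (j, n) k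

/-- Exponent of `A_{1,n} = Y_{1,n+1} Y_{1,n−1} Y_{2,n}^{−2}` (type `B₂`: `I₁₂ = 1`, `I₂₁ = 2`). -/
noncomputable def A1B2 (n : ℤ) : LExp2 := E 0 (n + 1) 1 + E 0 (n - 1) 1 + E 1 n (-2)

/-- Exponent of `A_{2,n} = Y_{2,n+1} Y_{2,n−1} Y_{1,n}^{−1}`. -/
noncomputable def A2B2 (n : ℤ) : LExp2 := E 1 (n + 1) 1 + E 1 (n - 1) 1 + E 0 n (-1)

/-- Relations submodule `e_{n+1} − A_n e_{n−1}` for a family of monomial exponents. -/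
noncomputable def scrRel (Av : ℤ → LExp2) : Submodule LRing2 (ℤ →₀ LRing2) :=
  Submodule.span LRing2
    {x | ∃ n : ℤ, x =
      Finsupp.single (n + 1) (1 : LRing2) - Ym (Av n) • Finsupp.single (n - 1) (1 : LRing2)}

/-- Target module of the screening operator. -/
noncomputable abbrev ScrMod (Av : ℤ → LExp2) : Type := (ℤ →₀ LRing2) ⧸ scrRel Av

/-- The class `ē_n` in the quotient module. -/
noncomputable def ebar (Av : ℤ → LExp2) (n : ℤ) : ScrMod Av :=
  Submodule.Quotient.mk (Finsupp.single n (1 : LRing2))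

/-- `F₁ = Y_{1,0} + Y_{1,2}^{−1} Y_{2,1}² + 2 Y_{2,1} Y_{2,3}^{−1} + Y_{2,3}^{−2} Y_{1,2} + Y_{1,4}^{−1}`. -/
noncomputable def F1B2 : LRing2 :=
  Ym (E 0 0 1) + Ym (E 0 2 (-1) + E 1 1 2) + 2 * Ym (E 1 1 1 + E 1 3 (-1))
    + Ym (E 1 3 (-2) + E 0 2 1) + Ym (E 0 4 (-1))

/-- `F₂ = Y_{2,0} + Y_{2,2}^{−1} Y_{1,1} + Y_{1,3}^{−1} Y_{2,2} + Y_{2,4}^{−1}`. -/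
noncomputable def F2B2 : LRing2 :=
  Ym (E 1 0 1) + Ym (E 1 2 (-1) + E 0 1 1) + Ym (E 0 3 (-1) + E 1 2 1) + Ym (E 1 4 (-1))


section StmtFourHelpers

lemma Ym_mul' (v w : LExp2) : Ym v * Ym w = Ym (v + w) := by
  simp [Ym, AddMonoidAlgebra.single_mul_single]

lemma Ym_zero' : Ym 0 = 1 := rfl

lemma Ezsmul' (j : Fin 2) (n k : ℤ) : E j n k = k • E j n 1 := by
  simp [E, Finsupp.smul_single]

variable {Av : ℤ → LExp2}

lemma smul_smul_Ym (v w : LExp2) (m : ScrMod Av) :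
    Ym v • Ym w • m = Ym (v + w) • m := by rw [← mul_smul, Ym_mul']

lemma S_one (S : LRing2 →ₗ[ℂ] ScrMod Av)
    (hL : ∀ x y : LRing2, S (x * y) = x • S y + y • S x) : S 1 = 0 := by
  have h := hL 1 1
  simp only [one_mul, one_smul] at h
  nth_rewrite 1 [← add_zero (S 1)] at h
  exact (add_left_cancel h).symm

lemma S_two (S : LRing2 →ₗ[ℂ] ScrMod Av)
    (hL : ∀ x y : LRing2, S (x * y) = x • S y + y • S x) : S 2 = 0 := by
  have h2 : (2 : LRing2) = 1 + 1 := by norm_num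
  rw [h2, map_add, S_one S hL]
  simp

/-- The "logarithmic derivative" of `S` on monomials, as an additive map. -/
noncomputable def T (S : LRing2 →ₗ[ℂ] ScrMod Av)
    (hL : ∀ x y : LRing2, S (x * y) = x • S y + y • S x) : LExp2 →+ ScrMod Av where
  toFun v := Ym (-v) • S (Ym v)
  map_zero' := by simp [Ym_zero', S_one S hL]
  map_add' v w := by
    have e1 : -(v + w) + w = -v := by abel
    have e2 : -(v + w) + v = -w := by abel
    show Ym (-(v+w)) • S (Ym (v+w)) = Ym (-v) • S (Ym v) + Ym (-w) • S (Ym w)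
    rw [← Ym_mul', hL, smul_add, smul_smul_Ym, smul_smul_Ym, e1, e2, add_comm]

lemma T_apply (S : LRing2 →ₗ[ℂ] ScrMod Av)
    (hL : ∀ x y : LRing2, S (x * y) = x • S y + y • S x) (v : LExp2) :
    T S hL v = Ym (-v) • S (Ym v) := rfl

lemma S_Ym (S : LRing2 →ₗ[ℂ] ScrMod Av)
    (hL : ∀ x y : LRing2, S (x * y) = x • S y + y • S x) (v : LExp2) :
    S (Ym v) = Ym v • T S hL v := by
  rw [T_apply, smul_smul_Ym]
  simp [Ym_zero']

lemma Tsingle (S : LRing2 →ₗ[ℂ] ScrMod Av)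
    (hL : ∀ x y : LRing2, S (x * y) = x • S y + y • S x) (j₀ : Fin 2)
    (hval : ∀ (j : Fin 2) (n : ℤ),
      S (Ym (E j n 1)) = if j = j₀ then Ym (E j₀ n 1) • ebar Av n else 0)
    (j : Fin 2) (n k : ℤ) :
    T S hL (E j n k) = if j = j₀ then k • ebar Av n else 0 := by
  rw [Ezsmul', map_zsmul, T_apply, hval j n]
  split_ifs with h
  · subst h
    rw [smul_smul_Ym]
    simp [Ym_zero']
  · simp

lemma ebar_rel (n : ℤ) : ebar Av (n + 1) = Ym (Av n) • ebar Av (n - 1) := by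
  have h : (Submodule.Quotient.mk (Finsupp.single (n+1) (1:LRing2)
      - Ym (Av n) • Finsupp.single (n-1) (1:LRing2)) : ScrMod Av) = 0 := by
    rw [Submodule.Quotient.mk_eq_zero]
    exact Submodule.subset_span ⟨n, rfl⟩
  rw [Submodule.Quotient.mk_sub, Submodule.Quotient.mk_smul, sub_eq_zero] at h
  exact h

lemma expA : (E 0 2 (-1) + E 1 1 2) + A1B2 1 = E 0 0 1 := by
  unfold A1B2 E
  ext ⟨j, n⟩
  simp [Finsupp.single_apply, Prod.ext_iff]
  fin_cases j <;> split_ifs <;> omega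

lemma expB : E 0 4 (-1) + A1B2 3 = E 1 3 (-2) + E 0 2 1 := by
  unfold A1B2 E
  ext ⟨j, n⟩
  simp [Finsupp.single_apply, Prod.ext_iff]
  fin_cases j <;> split_ifs <;> omega

lemma expC : (E 1 1 1 + E 1 3 (-1)) + A2B2 2 = E 0 2 (-1) + E 1 1 2 := by
  unfold A2B2 E
  ext ⟨j, n⟩
  simp [Finsupp.single_apply, Prod.ext_iff]
  fin_cases j <;> split_ifs <;> omega

lemma expD : (E 1 3 (-2) + E 0 2 1) + A2B2 2 = E 1 1 1 + E 1 3 (-1) := by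
  unfold A2B2 E
  ext ⟨j, n⟩
  simp [Finsupp.single_apply, Prod.ext_iff]
  fin_cases j <;> split_ifs <;> omega

lemma expE : (E 0 3 (-1) + E 1 2 1) + A1B2 2 = E 1 2 (-1) + E 0 1 1 := by
  unfold A1B2 E
  ext ⟨j, n⟩
  simp [Finsupp.single_apply, Prod.ext_iff]
  fin_cases j <;> split_ifs <;> omega

lemma expF : (E 1 2 (-1) + E 0 1 1) + A2B2 1 = E 1 0 1 := by
  unfold A2B2 E
  ext ⟨j, n⟩
  simp [Finsupp.single_apply, Prod.ext_iff]
  fin_cases j <;> split_ifs <;> omega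

lemma expG : E 1 4 (-1) + A2B2 3 = E 0 3 (-1) + E 1 2 1 := by
  unfold A2B2 E
  ext ⟨j, n⟩
  simp [Finsupp.single_apply, Prod.ext_iff]
  fin_cases j <;> split_ifs <;> omega

lemma coeF1 : ∀ v : LExp2, F1B2.coeff v =
    (if E 0 0 1 = v then 1 else 0) + (if E 0 2 (-1) + E 1 1 2 = v then 1 else 0)
    + (if E 1 1 1 + E 1 3 (-1) = v then 2 else 0)
    + (if E 1 3 (-2) + E 0 2 1 = v then 1 else 0) + (if E 0 4 (-1) = v then 1 else 0) := by
  intro v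
  unfold F1B2 Ym
  rw [two_mul]
  simp only [AddMonoidAlgebra.coeff_add, AddMonoidAlgebra.coeff_single, Finsupp.add_apply,
    Finsupp.single_apply]
  split_ifs <;> ring

lemma coeF2 : ∀ v : LExp2, F2B2.coeff v =
    (if E 1 0 1 = v then 1 else 0) + (if E 1 2 (-1) + E 0 1 1 = v then 1 else 0)
    + (if E 0 3 (-1) + E 1 2 1 = v then 1 else 0) + (if E 1 4 (-1) = v then 1 else 0) := by
  intro v
  unfold F2B2 Ym
  simp only [AddMonoidAlgebra.coeff_add, AddMonoidAlgebra.coeff_single, Finsupp.add_apply,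
    Finsupp.single_apply]

end StmtFourHelpers

/-- For type `B₂`, the elements `F₁, F₂` lie in `Ker S₁⁻ ∩ Ker S₂⁻`, and the
unique dominant monomial occurring in `F₁` (resp. `F₂`) is `Y_{1,0}` (resp. `Y_{2,0}`). -/
theorem stmt4
    (S1 : LRing2 →ₗ[ℂ] ScrMod A1B2) (S2 : LRing2 →ₗ[ℂ] ScrMod A2B2)
    (hLeib1 : ∀ x y : LRing2, S1 (x * y) = x • S1 y + y • S1 x)
    (hLeib2 : ∀ x y : LRing2, S2 (x * y) = x • S2 y + y • S2 x)
    (hval1 : ∀ (j : Fin 2) (n : ℤ),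
      S1 (Ym (E j n 1)) = if j = 0 then Ym (E 0 n 1) • ebar A1B2 n else 0)
    (hval2 : ∀ (j : Fin 2) (n : ℤ),
      S2 (Ym (E j n 1)) = if j = 1 then Ym (E 1 n 1) • ebar A2B2 n else 0) :
    (S1 F1B2 = 0 ∧ S2 F1B2 = 0 ∧ S1 F2B2 = 0 ∧ S2 F2B2 = 0) ∧
    (∀ v : LExp2, (v ∈ F1B2.coeff.support ∧ ∀ p, 0 ≤ v p) ↔ v = E 0 0 1) ∧
    (∀ v : LExp2, (v ∈ F2B2.coeff.support ∧ ∀ p, 0 ≤ v p) ↔ v = E 1 0 1) := by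
    classical
  have hT1 : ∀ (j : Fin 2) (n k : ℤ),
      T S1 hLeib1 (E j n k) = if j = 0 then k • ebar A1B2 n else 0 :=
    Tsingle S1 hLeib1 0 hval1
  have hT2 : ∀ (j : Fin 2) (n k : ℤ),
      T S2 hLeib2 (E j n k) = if j = 1 then k • ebar A2B2 n else 0 :=
    Tsingle S2 hLeib2 1 hval2
  have rA1 : ebar A1B2 2 = Ym (A1B2 1) • ebar A1B2 0 := by
    have h := ebar_rel (Av := A1B2) 1; norm_num at h; exact h
  have rA2 : ebar A1B2 4 = Ym (A1B2 3) • ebar A1B2 2 := by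
    have h := ebar_rel (Av := A1B2) 3; norm_num at h; exact h
  have rA3 : ebar A1B2 3 = Ym (A1B2 2) • ebar A1B2 1 := by
    have h := ebar_rel (Av := A1B2) 2; norm_num at h; exact h
  have rB1 : ebar A2B2 3 = Ym (A2B2 2) • ebar A2B2 1 := by
    have h := ebar_rel (Av := A2B2) 2; norm_num at h; exact h
  have rB2 : ebar A2B2 2 = Ym (A2B2 1) • ebar A2B2 0 := by
    have h := ebar_rel (Av := A2B2) 1; norm_num at h; exact h
  have rB3 : ebar A2B2 4 = Ym (A2B2 3) • ebar A2B2 2 := by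
    have h := ebar_rel (Av := A2B2) 3; norm_num at h; exact h
  -- kernel computations
  have c1 : S1 (Ym (E 0 0 1)) = Ym (E 0 0 1) • ebar A1B2 0 := by
    rw [S_Ym S1 hLeib1, hT1]; simp
  have c2 : S1 (Ym (E 0 2 (-1) + E 1 1 2)) = -(Ym (E 0 0 1) • ebar A1B2 0) := by
    rw [S_Ym S1 hLeib1, map_add, hT1, hT1, rA1]
    norm_num [smul_smul_Ym, expA]
  have c3 : S1 (Ym (E 1 1 1 + E 1 3 (-1))) = 0 := by
    rw [S_Ym S1 hLeib1, map_add, hT1, hT1]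
    norm_num
  have c4 : S1 (Ym (E 1 3 (-2) + E 0 2 1)) = Ym (E 1 3 (-2) + E 0 2 1) • ebar A1B2 2 := by
    rw [S_Ym S1 hLeib1, map_add, hT1, hT1]
    norm_num
  have c5 : S1 (Ym (E 0 4 (-1))) = -(Ym (E 1 3 (-2) + E 0 2 1) • ebar A1B2 2) := by
    rw [S_Ym S1 hLeib1, hT1, rA2]
    norm_num [smul_smul_Ym, expB]
  have h11 : S1 F1B2 = 0 := by
    unfold F1B2
    rw [map_add, map_add, map_add, map_add, hLeib1 2, c1, c2, c3, c4, c5, S_two S1 hLeib1]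
    simp only [smul_zero, add_zero]
    abel
  have d1 : S2 (Ym (E 0 0 1)) = 0 := by
    rw [S_Ym S2 hLeib2, hT2]; norm_num
  have d2 : S2 (Ym (E 0 2 (-1) + E 1 1 2)) =
      Ym (E 0 2 (-1) + E 1 1 2) • ebar A2B2 1 + Ym (E 0 2 (-1) + E 1 1 2) • ebar A2B2 1 := by
    rw [S_Ym S2 hLeib2, map_add, hT2, hT2]
    norm_num [two_smul, smul_add]
  have d3 : S2 (Ym (E 1 1 1 + E 1 3 (-1))) =
      Ym (E 1 1 1 + E 1 3 (-1)) • ebar A2B2 1 - Ym (E 0 2 (-1) + E 1 1 2) • ebar A2B2 1 := by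
    rw [S_Ym S2 hLeib2, map_add, hT2, hT2, rB1]
    norm_num [smul_smul_Ym, expC, smul_add, smul_sub, sub_eq_add_neg]
  have d4 : S2 (Ym (E 1 3 (-2) + E 0 2 1)) =
      -(Ym (E 1 1 1 + E 1 3 (-1)) • ebar A2B2 1 + Ym (E 1 1 1 + E 1 3 (-1)) • ebar A2B2 1) := by
    rw [S_Ym S2 hLeib2, map_add, hT2, hT2, rB1]
    norm_num [smul_smul_Ym, expD, two_smul, smul_add]
  have d5 : S2 (Ym (E 0 4 (-1))) = 0 := by
    rw [S_Ym S2 hLeib2, hT2]; norm_num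
  have h21 : S2 F1B2 = 0 := by
    unfold F1B2
    rw [map_add, map_add, map_add, map_add, hLeib2 2, d1, d2, d3, d4, d5, S_two S2 hLeib2]
    rw [two_smul, smul_zero]
    abel
  have g1 : S1 (Ym (E 1 0 1)) = 0 := by
    rw [S_Ym S1 hLeib1, hT1]; norm_num
  have g2 : S1 (Ym (E 1 2 (-1) + E 0 1 1)) = Ym (E 1 2 (-1) + E 0 1 1) • ebar A1B2 1 := by
    rw [S_Ym S1 hLeib1, map_add, hT1, hT1]
    norm_num
  have g3 : S1 (Ym (E 0 3 (-1) + E 1 2 1)) = -(Ym (E 1 2 (-1) + E 0 1 1) • ebar A1B2 1) := by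
    rw [S_Ym S1 hLeib1, map_add, hT1, hT1, rA3]
    norm_num [smul_smul_Ym, expE]
  have g4 : S1 (Ym (E 1 4 (-1))) = 0 := by
    rw [S_Ym S1 hLeib1, hT1]; norm_num
  have h12 : S1 F2B2 = 0 := by
    unfold F2B2
    rw [map_add, map_add, map_add, g1, g2, g3, g4]
    abel
  have f1 : S2 (Ym (E 1 0 1)) = Ym (E 1 0 1) • ebar A2B2 0 := by
    rw [S_Ym S2 hLeib2, hT2]; simp
  have f2 : S2 (Ym (E 1 2 (-1) + E 0 1 1)) = -(Ym (E 1 0 1) • ebar A2B2 0) := by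
    rw [S_Ym S2 hLeib2, map_add, hT2, hT2, rB2]
    norm_num [smul_smul_Ym, expF]
  have f3 : S2 (Ym (E 0 3 (-1) + E 1 2 1)) = Ym (E 0 3 (-1) + E 1 2 1) • ebar A2B2 2 := by
    rw [S_Ym S2 hLeib2, map_add, hT2, hT2]
    norm_num
  have f4 : S2 (Ym (E 1 4 (-1))) = -(Ym (E 0 3 (-1) + E 1 2 1) • ebar A2B2 2) := by
    rw [S_Ym S2 hLeib2, hT2, rB3]
    norm_num [smul_smul_Ym, expG]
  have h22 : S2 F2B2 = 0 := by
    unfold F2B2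
    rw [map_add, map_add, map_add, f1, f2, f3, f4]
    abel
  refine ⟨⟨h11, h21, h12, h22⟩, ?_, ?_⟩
  · intro v
    constructor
    · rintro ⟨hs, hpos⟩
      rw [Finsupp.mem_support_iff, coeF1 v] at hs
      by_contra hne
      have k1 : ¬ (E 0 0 1 = v) := fun h => hne h.symm
      have k2 : ¬ (E 0 2 (-1) + E 1 1 2 = v) := by
        intro h
        have h0 := hpos ((0 : Fin 2), (2 : ℤ))
        rw [← h] at h0
        norm_num [E, Finsupp.single_apply, Prod.ext_iff] at h0
      have k3 : ¬ (E 1 1 1 + E 1 3 (-1) = v) := by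
        intro h
        have h0 := hpos ((1 : Fin 2), (3 : ℤ))
        rw [← h] at h0
        norm_num [E, Finsupp.single_apply, Prod.ext_iff] at h0
      have k4 : ¬ (E 1 3 (-2) + E 0 2 1 = v) := by
        intro h
        have h0 := hpos ((1 : Fin 2), (3 : ℤ))
        rw [← h] at h0
        norm_num [E, Finsupp.single_apply, Prod.ext_iff] at h0
      have k5 : ¬ (E 0 4 (-1) = v) := by
        intro h
        have h0 := hpos ((0 : Fin 2), (4 : ℤ))
        rw [← h] at h0
        norm_num [E, Finsupp.single_apply, Prod.ext_iff] at h0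
      rw [if_neg k1, if_neg k2, if_neg k3, if_neg k4, if_neg k5] at hs
      norm_num at hs
    · intro h
      subst h
      constructor
      · rw [Finsupp.mem_support_iff, coeF1]
        have k2 : ¬ (E 0 2 (-1) + E 1 1 2 = E 0 0 1) := by
          intro h
          have h0 := DFunLike.congr_fun h ((0 : Fin 2), (2 : ℤ))
          norm_num [E, Finsupp.single_apply, Prod.ext_iff] at h0
        have k3 : ¬ (E 1 1 1 + E 1 3 (-1) = E 0 0 1) := by
          intro h
          have h0 := DFunLike.congr_fun h ((1 : Fin 2), (3 : ℤ))
          norm_num [E, Finsupp.single_apply, Prod.ext_iff] at h0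
        have k4 : ¬ (E 1 3 (-2) + E 0 2 1 = E 0 0 1) := by
          intro h
          have h0 := DFunLike.congr_fun h ((1 : Fin 2), (3 : ℤ))
          norm_num [E, Finsupp.single_apply, Prod.ext_iff] at h0
        have k5 : ¬ (E 0 4 (-1) = E 0 0 1) := by
          intro h
          have h0 := DFunLike.congr_fun h ((0 : Fin 2), (4 : ℤ))
          norm_num [E, Finsupp.single_apply, Prod.ext_iff] at h0
        rw [if_pos rfl, if_neg k2, if_neg k3, if_neg k4, if_neg k5]
        norm_num
      · intro p
        unfold E
        rw [Finsupp.single_apply]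
        split_ifs <;> omega
  · intro v
    constructor
    · rintro ⟨hs, hpos⟩
      rw [Finsupp.mem_support_iff, coeF2 v] at hs
      by_contra hne
      have k1 : ¬ (E 1 0 1 = v) := fun h => hne h.symm
      have k2 : ¬ (E 1 2 (-1) + E 0 1 1 = v) := by
        intro h
        have h0 := hpos ((1 : Fin 2), (2 : ℤ))
        rw [← h] at h0
        norm_num [E, Finsupp.single_apply, Prod.ext_iff] at h0
      have k3 : ¬ (E 0 3 (-1) + E 1 2 1 = v) := by
        intro h
        have h0 := hpos ((0 : Fin 2), (3 : ℤ))
        rw [← h] at h0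
        norm_num [E, Finsupp.single_apply, Prod.ext_iff] at h0
      have k4 : ¬ (E 1 4 (-1) = v) := by
        intro h
        have h0 := hpos ((1 : Fin 2), (4 : ℤ))
        rw [← h] at h0
        norm_num [E, Finsupp.single_apply, Prod.ext_iff] at h0
      rw [if_neg k1, if_neg k2, if_neg k3, if_neg k4] at hs
      norm_num at hs
    · intro h
      subst h
      constructor
      · rw [Finsupp.mem_support_iff, coeF2]
        have k2 : ¬ (E 1 2 (-1) + E 0 1 1 = E 1 0 1) := by
          intro h
          have h0 := DFunLike.congr_fun h ((1 : Fin 2), (2 : ℤ))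
          norm_num [E, Finsupp.single_apply, Prod.ext_iff] at h0
        have k3 : ¬ (E 0 3 (-1) + E 1 2 1 = E 1 0 1) := by
          intro h
          have h0 := DFunLike.congr_fun h ((0 : Fin 2), (3 : ℤ))
          norm_num [E, Finsupp.single_apply, Prod.ext_iff] at h0
        have k4 : ¬ (E 1 4 (-1) = E 1 0 1) := by
          intro h
          have h0 := DFunLike.congr_fun h ((1 : Fin 2), (4 : ℤ))
          norm_num [E, Finsupp.single_apply, Prod.ext_iff] at h0
        rw [if_pos rfl, if_neg k2, if_neg k3, if_neg k4]
        norm_num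
      · intro p
        unfold E
        rw [Finsupp.single_apply]
        split_ifs <;> omega
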